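/- Let u ∈ V and let w ∈ V(P_u) be such that φ(χ(u,p(u))) > φ(χ(w,p(w))). Then for every vertex x in the subtree rooted at u and every k ∈ ℤ with 2^k > 6·d_T(x,w) / ( φ(χ(u,p(u))) − φ(χ(w,p(w))) ), it holds that τ_k(x) = 0. -/

import Mathlib

open scoped Classical

noncomputable section

/-- A finite rooted metric tree.  Each non-root vertex `v` determines the edge
`(v, parent v)`; edges are identified with their lower endpoints. -/
structure FinTree : Type 1 where
  V : Type
  fin : Fintype V
  root : V
  parent : V → V
  parent_root : parent root = root
  reaches_root : ∀ v : V, ∃ n : ℕ, parent^[n] v = root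
  len : V → ℝ
  len_nonneg : ∀ v : V, 0 ≤ len v

attribute [instance] FinTree.fin

namespace FinTree

variable (T : FinTree)

/-- `u` is a (weak) ancestor of `v`. -/
def Anc (u v : T.V) : Prop := ∃ n : ℕ, T.parent^[n] v = u

/-- The set of edges (identified with their lower endpoints) on the path `P_v`
from the root to `v`. -/
def pathToRoot (v : T.V) : Finset T.V :=
  Finset.univ.filter fun u => u ≠ T.root ∧ T.Anc u v

/-- The set of edges on the unique path between `x` and `y`. -/
def pathEdges (x y : T.V) : Finset T.V :=
  (T.pathToRoot x \ T.pathToRoot y) ∪ (T.pathToRoot y \ T.pathToRoot x)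

/-- The shortest-path pseudometric `d_T` of the tree. -/
def dist (x y : T.V) : ℝ := ∑ e ∈ T.pathEdges x y, T.len e

/-- The set of all edges of the tree. -/
def edges : Finset T.V := Finset.univ.filter fun u => u ≠ T.root

/-- The depth of a vertex (number of edges on the path to the root). -/
def depth (v : T.V) : ℕ := Nat.find (T.reaches_root v)

/-- `x` lies on the path between `a` and `b`. -/
def OnPath (x a b : T.V) : Prop := T.pathEdges a x ⊆ T.pathEdges a b

/-- `T` is the complete `k`-ary tree of height `h` with unit edge lengths. -/
def IsCompleteKAry (k h : ℕ) : Prop :=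
  (∀ v : T.V, v ≠ T.root → T.len v = 1) ∧
  (∀ v : T.V, T.depth v ≤ h) ∧
  ∀ v : T.V, T.depth v < h →
    (Finset.univ.filter fun u : T.V => T.parent u = v ∧ u ≠ v).card = k

/-- A monotone coloring: every color class is a connected subset of the edge
set of some root-leaf path. -/
def IsMonotone (χ : T.V → ℕ) : Prop :=
  ∀ u v : T.V, u ≠ T.root → v ≠ T.root → χ u = χ v →
    (T.Anc u v ∨ T.Anc v u) ∧
      ∀ w : T.V, w ≠ T.root → T.Anc u w → T.Anc w v → χ w = χ u

/-- The multiplicity `M(χ)` of a coloring. -/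
def mult (χ : T.V → ℕ) : ℕ :=
  Finset.univ.sup fun v : T.V => ((T.pathToRoot v).image χ).card

/-- `len_χ(c)`: the total length of the color class of `c`. -/
def colorLen (χ : T.V → ℕ) (c : ℕ) : ℝ :=
  ∑ e ∈ T.edges.filter (fun e => χ e = c), T.len e

/-- The set of colors `C_χ(x,y;δ)`. -/
def sigColors (χ : T.V → ℕ) (x y : T.V) (δ : ℝ) : Finset ℕ :=
  (((T.pathToRoot x).image χ \ (T.pathToRoot y).image χ) ∪
      ((T.pathToRoot y).image χ \ (T.pathToRoot x).image χ)).filter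
    fun c => (∑ e ∈ (T.pathEdges x y).filter (fun e => χ e = c), T.len e) ≤ δ * T.colorLen χ c

/-- `ρ_χ(x,y;δ)`. -/
def rho (χ : T.V → ℕ) (x y : T.V) (δ : ℝ) : ℝ :=
  ∑ c ∈ T.sigColors χ x y δ, T.colorLen χ c

/-- The topmost edge of the color class of `c` (junk value if none exists). -/
def topEdge (χ : T.V → ℕ) (c : ℕ) : T.V :=
  if h : ∃ e : T.V, e ≠ T.root ∧ χ e = c ∧ ∀ e' : T.V, e' ≠ T.root → χ e' = c → T.Anc e e'
  then h.choose else T.root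

/-- `v_c`: the vertex of `γ_c` closest to the root. -/
def vcol (χ : T.V → ℕ) (c : ℕ) : T.V := T.parent (T.topEdge χ c)

/-- The edge set `E(T(c))` of the subtree under the color `c`; for the root
color `c₀` it is all of `E`. -/
def subEdges (χ : T.V → ℕ) (c₀ c : ℕ) : Finset T.V :=
  if c = c₀ then T.edges else T.edges.filter fun e => T.Anc (T.topEdge χ c) e

/-- The parent color `ρ(c) = χ(v_c, p(v_c))`, with the convention
`χ(r,r) = c₀`. -/
def parentColor (χ : T.V → ℕ) (c₀ c : ℕ) : ℕ :=
  if T.vcol χ c = T.root then c₀ else χ (T.vcol χ c)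

/-- `κ(c) = ⌊log₂(|E(T(ρ(c)))| / |E(T(c))|)⌋ + 1`. -/
def kappa (χ : T.V → ℕ) (c₀ c : ℕ) : ℤ :=
  ⌊Real.logb 2 (((T.subEdges χ c₀ (T.parentColor χ c₀ c)).card : ℝ) /
      ((T.subEdges χ c₀ c).card : ℝ))⌋ + 1

/-- `φ(c₀) = 0` and `φ(c) = κ(c) + φ(ρ(c))`; equivalently
`φ(c) = Σ_{c' ∈ χ(E(P_{v_c})) ∪ {c}} κ(c')`. -/
def phi (χ : T.V → ℕ) (c₀ c : ℕ) : ℤ :=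
  if c = c₀ then 0
  else T.kappa χ c₀ c + ∑ c' ∈ (T.pathToRoot (T.vcol χ c)).image χ, T.kappa χ c₀ c'

/-- `m(T)`: the minimum positive edge length. -/
def minLen : ℝ := sInf {x : ℝ | ∃ e : T.V, e ≠ T.root ∧ 0 < T.len e ∧ T.len e = x}

/-- `⌊log₂( m(T) / (M(χ) + log₂|E|) )⌋`, the scale below which all `τ_i` vanish. -/
def iMin (χ : T.V → ℕ) : ℤ :=
  ⌊Real.logb 2 (T.minLen / ((T.mult χ : ℝ) + Real.logb 2 (T.edges.card : ℝ)))⌋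

/-- `τ` is the family of scale selectors: `τ_i(v) = 0` for `i < iMin`, and for
`i ≥ iMin`,
`τ_i(v) = min( ⌈(d_T(v,v_c) − min(d_T(v,v_c), Σ_{j<i} 2^j τ_j(v)))/2^i⌉,
               φ(c) − Σ_{c' ∈ χ(E(P_v))} τ_i(v_{c'}) )` where `c = χ(v,p(v))`. -/
def IsScaleSelector (χ : T.V → ℕ) (c₀ : ℕ) (τ : ℤ → T.V → ℕ) : Prop :=
  (∀ v : T.V, ∀ i : ℤ, i < T.iMin χ → τ i v = 0) ∧
  ∀ v : T.V, v ≠ T.root → ∀ i : ℤ, T.iMin χ ≤ i →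
    (τ i v : ℤ) =
      min
        ⌈(T.dist v (T.vcol χ (χ v)) -
            min (T.dist v (T.vcol χ (χ v)))
              (∑ j ∈ Finset.Ico (T.iMin χ) i, (2 : ℝ) ^ j * (τ j v : ℝ))) / (2 : ℝ) ^ i⌉
        (T.phi χ c₀ (χ v) - ∑ c' ∈ (T.pathToRoot v).image χ, (τ i (T.vcol χ c') : ℤ))

/-- The matrix `Δ_i(v) ∈ ℝ^{m×t}`. -/
def Delta (χ : T.V → ℕ) (c₀ : ℕ) (τ : ℤ → T.V → ℕ) (m t : ℕ) (i : ℤ) (v : T.V) :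
    Matrix (Fin m) (Fin t) ℝ := fun j k =>
  let d : ℝ := T.dist v (T.vcol χ (χ v))
  let s : ℝ := ∑ l ∈ Finset.Ico (T.iMin χ) i, (2 : ℝ) ^ l * (τ l v : ℝ)
  let α : ℤ := ∑ c' ∈ (T.pathToRoot v).image χ, ((t : ℤ) ^ 2 * (τ i (T.vcol χ c') : ℤ))
  let β : ℤ := α + min ((t : ℤ) ^ 2 * (τ i v : ℤ)) ⌊(d - s) * (t : ℝ) ^ 2 / (2 : ℝ) ^ i⌋
  if (k : ℕ) = 0 then
    if α < (j : ℤ) + 1 ∧ (j : ℤ) + 1 ≤ β then (2 : ℝ) ^ i / (t : ℝ) ^ 2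
    else if (j : ℤ) + 1 = β + 1 ∧ β - α < (t : ℤ) ^ 2 * (τ i v : ℤ) then
      d - (s + ((β - α : ℤ) : ℝ) * ((2 : ℝ) ^ i / (t : ℝ) ^ 2))
    else 0
  else 0

end FinTree

/-- The entrywise ℓ₁ norm of a matrix. -/
def matOne {m t : ℕ} (A : Matrix (Fin m) (Fin t) ℝ) : ℝ := ∑ j, ∑ k, |A j k|

namespace FinTree

variable {T : FinTree}

lemma iterate_parent_root (n : ℕ) : T.parent^[n] T.root = T.root := by
  induction n with
  | zero => rfl
  | succ n ih => rw [Function.iterate_succ_apply, T.parent_root, ih]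

lemma anc_refl (v : T.V) : T.Anc v v := ⟨0, rfl⟩

lemma anc_trans {a b c : T.V} (h1 : T.Anc a b) (h2 : T.Anc b c) : T.Anc a c := by
  obtain ⟨n, rfl⟩ := h1; obtain ⟨m, rfl⟩ := h2
  exact ⟨n + m, by rw [Function.iterate_add_apply]⟩

lemma anc_root_eq {u : T.V} (h : T.Anc u T.root) : u = T.root := by
  obtain ⟨n, rfl⟩ := h; exact iterate_parent_root n

lemma depth_spec (v : T.V) : T.parent^[T.depth v] v = T.root := Nat.find_spec (T.reaches_root v)

lemma depth_le {v : T.V} {n : ℕ} (h : T.parent^[n] v = T.root) : T.depth v ≤ n :=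
  Nat.find_le h

lemma eq_root_of_depth_eq_zero {v : T.V} (h : T.depth v = 0) : v = T.root := by
  have := depth_spec v; rwa [h] at this

lemma iterate_eq_root {v : T.V} {n : ℕ} (h : T.depth v ≤ n) : T.parent^[n] v = T.root := by
  have := depth_spec v
  calc T.parent^[n] v = T.parent^[n - T.depth v] (T.parent^[T.depth v] v) := by
        rw [← Function.iterate_add_apply]; congr 1; omega
  _ = T.root := by rw [this, iterate_parent_root]

lemma iterate_ne_root {v : T.V} {n : ℕ} (h : n < T.depth v) : T.parent^[n] v ≠ T.root := by
  intro hr; exact absurd (depth_le hr) (by omega)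

lemma depth_iterate {v : T.V} {n : ℕ} (h : n ≤ T.depth v) :
    T.depth (T.parent^[n] v) = T.depth v - n := by
  induction n with
  | zero => simp
  | succ n ih =>
    have hn : n ≤ T.depth v := by omega
    have hne : T.parent^[n] v ≠ T.root := iterate_ne_root (by omega)
    -- depth (parent u) = depth u - 1 for u ≠ root
    have key : ∀ u : T.V, u ≠ T.root → T.depth (T.parent u) = T.depth u - 1 := by
      intro u hu
      have h1 : T.depth u ≠ 0 := fun h0 => hu (eq_root_of_depth_eq_zero h0)
      have hs : T.parent^[T.depth u - 1] (T.parent u) = T.root := by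
        have := depth_spec u
        rwa [show T.depth u = (T.depth u - 1) + 1 by omega, Function.iterate_succ_apply] at this
      have le1 : T.depth (T.parent u) ≤ T.depth u - 1 := depth_le hs
      have le2 : T.depth u ≤ T.depth (T.parent u) + 1 := by
        apply depth_le
        rw [Function.iterate_succ_apply]; exact depth_spec (T.parent u)
      omega
    rw [Function.iterate_succ_apply', key _ hne, ih hn]
    omega

lemma anc_depth_le {u v : T.V} (h : T.Anc u v) : T.depth u ≤ T.depth v := by
  obtain ⟨n, rfl⟩ := h
  by_cases hn : n ≤ T.depth v
  · rw [depth_iterate hn]; omega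
  · rw [iterate_eq_root (by omega)]
    have : T.depth T.root = 0 := Nat.le_zero.mp (depth_le (show T.parent^[0] T.root = T.root from rfl))
    omega

lemma anc_eq_of_depth_le {u v : T.V} (h : T.Anc u v) (hd : T.depth v ≤ T.depth u) : u = v := by
  obtain ⟨n, rfl⟩ := h
  by_cases hn : n ≤ T.depth v
  · have := depth_iterate (v := v) hn
    have hn0 : n = 0 := by omega
    rw [hn0]; rfl
  · have hroot : T.parent^[n] v = T.root := iterate_eq_root (by omega)
    rw [hroot] at hd ⊢
    have : T.depth T.root = 0 := Nat.le_zero.mp (depth_le (show T.parent^[0] T.root = T.root from rfl))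
    have hv : T.depth v = 0 := by omega
    exact (eq_root_of_depth_eq_zero hv).symm

lemma anc_antisymm {u v : T.V} (h1 : T.Anc u v) (h2 : T.Anc v u) : u = v :=
  anc_eq_of_depth_le h1 (anc_depth_le h2)

lemma anc_total {a b x : T.V} (h1 : T.Anc a x) (h2 : T.Anc b x) : T.Anc a b ∨ T.Anc b a := by
  obtain ⟨n, rfl⟩ := h1; obtain ⟨m, rfl⟩ := h2
  rcases le_total n m with h | h
  · right; exact ⟨m - n, by rw [← Function.iterate_add_apply]; congr 1; omega⟩
  · left; exact ⟨n - m, by rw [← Function.iterate_add_apply]; congr 1; omega⟩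

lemma anc_parent_self (b : T.V) : T.Anc (T.parent b) b := ⟨1, rfl⟩

lemma anc_parent_of_ne {a b : T.V} (h : T.Anc a b) (hne : a ≠ b) : T.Anc a (T.parent b) := by
  obtain ⟨n, rfl⟩ := h
  match n with
  | 0 => exact absurd rfl hne
  | n + 1 => exact ⟨n, by rw [← Function.iterate_succ_apply]⟩

lemma ne_root_of_anc {w v : T.V} (h : T.Anc w v) (hw : w ≠ T.root) : v ≠ T.root := by
  rintro rfl; exact hw (anc_root_eq h)


lemma mem_pathToRoot {u v : T.V} : u ∈ T.pathToRoot v ↔ u ≠ T.root ∧ T.Anc u v := by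
  simp [pathToRoot]

lemma pathToRoot_mono {u v : T.V} (h : T.Anc u v) : T.pathToRoot u ⊆ T.pathToRoot v := by
  intro e he
  rw [mem_pathToRoot] at he ⊢
  exact ⟨he.1, anc_trans he.2 h⟩

lemma pathToRoot_root : T.pathToRoot T.root = ∅ := by
  ext e; simp only [mem_pathToRoot, Finset.notMem_empty, iff_false]
  rintro ⟨h1, h2⟩; exact h1 (anc_root_eq h2)

/-- total length from root to `v`. -/
def plen (T : FinTree) (v : T.V) : ℝ := ∑ e ∈ T.pathToRoot v, T.len e

lemma plen_mono {u v : T.V} (h : T.Anc u v) : T.plen u ≤ T.plen v :=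
  Finset.sum_le_sum_of_subset_of_nonneg (pathToRoot_mono h) (fun e _ _ => T.len_nonneg e)

lemma dist_eq_of_anc {u v : T.V} (h : T.Anc u v) : T.dist v u = T.plen v - T.plen u := by
  have hsub : T.pathToRoot u ⊆ T.pathToRoot v := pathToRoot_mono h
  have h2 : T.pathToRoot u \ T.pathToRoot v = ∅ := Finset.sdiff_eq_empty_iff_subset.mpr hsub
  rw [dist, pathEdges, h2, Finset.union_empty, Finset.sum_sdiff_eq_sub hsub, plen, plen]

lemma dist_nonneg_of_anc {u v : T.V} (h : T.Anc u v) : 0 ≤ T.dist v u := by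
  rw [dist_eq_of_anc h]; linarith [plen_mono h]


section Coloring
variable {χ : T.V → ℕ}

lemma exists_top (hχ : T.IsMonotone χ) {c : ℕ} (hc : ∃ e : T.V, e ≠ T.root ∧ χ e = c) :
    ∃ e : T.V, e ≠ T.root ∧ χ e = c ∧ ∀ e' : T.V, e' ≠ T.root → χ e' = c → T.Anc e e' := by
  classical
  obtain ⟨e1, he1, hc1⟩ := hc
  have hne : (Finset.univ.filter fun e : T.V => e ≠ T.root ∧ χ e = c).Nonempty :=
    ⟨e1, by simp [he1, hc1]⟩
  obtain ⟨e₀, he₀, hmin⟩ := Finset.exists_min_image _ T.depth hne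
  simp only [Finset.mem_filter, Finset.mem_univ, true_and] at he₀ hmin
  refine ⟨e₀, he₀.1, he₀.2, fun e' he' hce' => ?_⟩
  rcases (hχ e₀ e' he₀.1 he' (by rw [he₀.2, hce'])).1 with h | h
  · exact h
  · have : e' = e₀ := anc_eq_of_depth_le h (hmin e' ⟨he', hce'⟩)
    rw [this]; exact anc_refl e₀

lemma topEdge_spec (hχ : T.IsMonotone χ) {c : ℕ} (hc : ∃ e : T.V, e ≠ T.root ∧ χ e = c) :
    T.topEdge χ c ≠ T.root ∧ χ (T.topEdge χ c) = c ∧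
      ∀ e' : T.V, e' ≠ T.root → χ e' = c → T.Anc (T.topEdge χ c) e' := by
  have h := exists_top hχ hc
  rw [topEdge, dif_pos h]
  exact h.choose_spec

end Coloring


section Order
variable {χ : T.V → ℕ} {x : T.V}

lemma exists_edge_of_mem_C {c : ℕ} (hc : c ∈ (T.pathToRoot x).image χ) :
    ∃ e : T.V, e ∈ T.pathToRoot x ∧ χ e = c := by
  simpa using hc

lemma exists_edge_of_mem_C' {c : ℕ} (hc : c ∈ (T.pathToRoot x).image χ) :
    ∃ e : T.V, e ≠ T.root ∧ χ e = c := by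
  obtain ⟨e, he, hce⟩ := exists_edge_of_mem_C hc
  exact ⟨e, (mem_pathToRoot.mp he).1, hce⟩

lemma top_ne_root (hχ : T.IsMonotone χ) {c : ℕ} (hc : c ∈ (T.pathToRoot x).image χ) : T.topEdge χ c ≠ T.root :=
  (topEdge_spec hχ (exists_edge_of_mem_C' hc)).1

lemma chi_top (hχ : T.IsMonotone χ) {c : ℕ} (hc : c ∈ (T.pathToRoot x).image χ) : χ (T.topEdge χ c) = c :=
  (topEdge_spec hχ (exists_edge_of_mem_C' hc)).2.1

lemma top_anc (hχ : T.IsMonotone χ) {c : ℕ} (hc : c ∈ (T.pathToRoot x).image χ) {e : T.V} (he : e ≠ T.root)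
    (hce : χ e = c) : T.Anc (T.topEdge χ c) e :=
  (topEdge_spec hχ (exists_edge_of_mem_C' hc)).2.2 e he hce

lemma top_mem_path (hχ : T.IsMonotone χ) {c : ℕ} (hc : c ∈ (T.pathToRoot x).image χ) :
    T.topEdge χ c ∈ T.pathToRoot x := by
  obtain ⟨e, he, hce⟩ := exists_edge_of_mem_C hc
  rw [mem_pathToRoot] at he ⊢
  exact ⟨top_ne_root hχ hc, anc_trans (top_anc hχ hc he.1 hce) he.2⟩

/-- S2 : tops are ordered like the edges along `P_x`. -/
lemma top_anc_top (hχ : T.IsMonotone χ) {e e' : T.V} (he : e ∈ T.pathToRoot x) (he' : e' ∈ T.pathToRoot x)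
    (h : T.Anc e' e) :
    T.Anc (T.topEdge χ (χ e')) (T.topEdge χ (χ e)) := by
  by_cases hcc : χ e' = χ e
  · rw [hcc]; exact anc_refl _
  rw [mem_pathToRoot] at he he'
  have hce : χ e ∈ (T.pathToRoot x).image χ :=
    Finset.mem_image_of_mem χ (mem_pathToRoot.mpr he)
  have hce' : χ e' ∈ (T.pathToRoot x).image χ :=
    Finset.mem_image_of_mem χ (mem_pathToRoot.mpr he')
  have h1 : T.Anc (T.topEdge χ (χ e)) x :=
    anc_trans (top_anc hχ hce he.1 rfl) he.2
  have h2 : T.Anc (T.topEdge χ (χ e')) x :=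
    anc_trans (top_anc hχ hce' he'.1 rfl) he'.2
  rcases anc_total h2 h1 with hgood | hbad
  · exact hgood
  · exfalso
    -- t(χ e) is above t(χ e') which is above e' which is above e; monotone forces χ e' = χ e
    have hte : T.Anc (T.topEdge χ (χ e)) e' :=
      anc_trans hbad (top_anc hχ hce' he'.1 rfl)
    have := (hχ (T.topEdge χ (χ e)) e (top_ne_root hχ hce) he.1 (chi_top hχ hce)).2
      e' he'.1 hte h
    rw [chi_top hχ hce] at this
    exact hcc this

end Order


lemma sum_two_zpow_Ico {a b : ℤ} (h : a ≤ b) :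
    ∑ i ∈ Finset.Ico a b, (2:ℝ)^i = 2^b - 2^a := by
  refine Int.le_induction (motive := fun b _ => ∑ i ∈ Finset.Ico a b, (2:ℝ)^i = 2^b - 2^a) ?_ ?_ b h
  · simp
  · intro b hab ih
    have hins : Finset.Ico a (b+1) = insert b (Finset.Ico a b) := by
      ext j; simp only [Finset.mem_Ico, Finset.mem_insert]; omega
    rw [hins, Finset.sum_insert (by simp), ih]
    have : (2:ℝ)^(b+1) = 2^b * 2 := by
      rw [zpow_add_one₀ (by norm_num : (2:ℝ) ≠ 0)]
    rw [this]; ring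

section Scale
variable {χ : T.V → ℕ} {c₀ : ℕ} {τ : ℤ → T.V → ℕ}

lemma vcol_anc (hχ : T.IsMonotone χ) {v : T.V} (hv : v ≠ T.root) :
    T.Anc (T.vcol χ (χ v)) v := by
  have hex : ∃ e : T.V, e ≠ T.root ∧ χ e = χ v := ⟨v, hv, rfl⟩
  have := (topEdge_spec hχ hex).2.2 v hv rfl
  exact anc_trans (anc_parent_self _) this

lemma s_nonneg (v : T.V) (S : Finset ℤ) :
    0 ≤ ∑ j ∈ S, (2:ℝ)^j * (τ j v : ℝ) :=
  Finset.sum_nonneg fun j _ => mul_nonneg (by positivity) (Nat.cast_nonneg _)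

lemma tau_eq_zero_of_covered (hτ : T.IsScaleSelector χ c₀ τ) {v : T.V} (hv : v ≠ T.root)
    {i : ℤ} (hi : T.iMin χ ≤ i)
    (hs : T.dist v (T.vcol χ (χ v)) ≤ ∑ j ∈ Finset.Ico (T.iMin χ) i, (2:ℝ)^j * (τ j v : ℝ)) :
    τ i v = 0 := by
  have heq := hτ.2 v hv i hi
  rw [min_eq_left hs] at heq
  simp only [sub_self, zero_div, Int.ceil_zero] at heq
  have h1 : (τ i v : ℤ) ≤ 0 := heq.le.trans (min_le_left _ _)
  exact_mod_cast le_antisymm h1 (Int.ofNat_nonneg _)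

lemma s_le (hχ : T.IsMonotone χ) (hτ : T.IsScaleSelector χ c₀ τ) {v : T.V} (hv : v ≠ T.root)
    {i : ℤ} (hi : T.iMin χ ≤ i) :
    ∑ j ∈ Finset.Ico (T.iMin χ) i, (2:ℝ)^j * (τ j v : ℝ) ≤
      T.dist v (T.vcol χ (χ v)) + 2^(i-1) := by
  have hd0 : 0 ≤ T.dist v (T.vcol χ (χ v)) := dist_nonneg_of_anc (vcol_anc hχ hv)
  refine Int.le_induction (motive := fun i _ => ∑ j ∈ Finset.Ico (T.iMin χ) i, (2:ℝ)^j * (τ j v : ℝ) ≤ T.dist v (T.vcol χ (χ v)) + 2^(i-1)) ?_ ?_ i hi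
  · have h2 : (0:ℝ) ≤ 2^(T.iMin χ - 1) := by positivity
    simpa using le_trans hd0 (by linarith)
  · intro i hi ih
    have hins : Finset.Ico (T.iMin χ) (i+1) = insert i (Finset.Ico (T.iMin χ) i) := by
      ext j; simp only [Finset.mem_Ico, Finset.mem_insert]; omega
    rw [hins, Finset.sum_insert (by simp)]
    set d := T.dist v (T.vcol χ (χ v)) with hdd
    set s := ∑ j ∈ Finset.Ico (T.iMin χ) i, (2:ℝ)^j * (τ j v : ℝ) with hss
    rcases le_or_gt d s with hcase | hcase
    · have h0 : τ i v = 0 := tau_eq_zero_of_covered hτ hv hi hcase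
      rw [h0]
      have h2 : s ≤ d + 2^(i-1) := ih
      have h3 : (2:ℝ)^(i-1) ≤ 2^(i+1-1) := by
        apply zpow_le_zpow_right₀ (by norm_num) (by omega)
      push_cast
      linarith
    · have heq := hτ.2 v hv i hi
      have h1 : (τ i v : ℤ) ≤ ⌈(d - min d s) / (2:ℝ)^i⌉ := heq.le.trans (min_le_left _ _)
      rw [min_eq_right hcase.le] at h1
      have h2 : ((τ i v : ℤ) : ℝ) ≤ (⌈(d - s) / (2:ℝ)^i⌉ : ℝ) := Int.cast_le.mpr h1
      push_cast at h2
      have h3 : (⌈(d - s) / (2:ℝ)^i⌉ : ℝ) < (d - s) / 2^i + 1 := Int.ceil_lt_add_one _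
      have h5 : (τ i v : ℝ) < (d - s) / 2^i + 1 := lt_of_le_of_lt h2 h3
      have hp : (0:ℝ) < 2^i := by positivity
      have hfe : (2:ℝ)^i * ((d - s)/2^i + 1) = d - s + 2^i := by field_simp
      have h4 : (2:ℝ)^i * (τ i v : ℝ) < d - s + 2^i := by
        rw [← hfe]; exact mul_lt_mul_of_pos_left h5 hp
      have h6 : (2:ℝ)^(i+1-1) = 2^i := by norm_num
      rw [h6]
      linarith

end Scale

lemma interval_packing (a b : ℕ → ℝ) (D : ℕ → ℕ) (lo : ℝ) (S : Finset ℕ) :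
    ∀ hi : ℝ, (∀ c ∈ S, a c ≤ b c) →
      (∀ c ∈ S, ∀ c' ∈ S, D c < D c' → b c ≤ a c') →
      (∀ c ∈ S, ∀ c' ∈ S, D c = D c' → c = c') →
      (∀ c ∈ S, lo ≤ a c) → (∀ c ∈ S, b c ≤ hi) → lo ≤ hi →
      ∑ c ∈ S, (b c - a c) ≤ hi - lo := by
  induction S using Finset.strongInduction with
  | _ S ih =>
    intro hi h1 h2 hD h3 h4 h5
    rcases S.eq_empty_or_nonempty with rfl | hne
    · simpa using h5
    obtain ⟨cs, hcs, hmax⟩ := Finset.exists_max_image S D hne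
    have hsub : S.erase cs ⊂ S := Finset.erase_ssubset hcs
    have key : ∀ c ∈ S.erase cs, b c ≤ a cs := by
      intro c hc
      have hcS := Finset.mem_of_mem_erase hc
      have hne' : c ≠ cs := Finset.ne_of_mem_erase hc
      have hlt : D c < D cs := by
        rcases lt_or_eq_of_le (hmax c hcS) with h | h
        · exact h
        · exact absurd (hD c hcS cs hcs h) hne'
      exact h2 c hcS cs hcs hlt
    have hrec := ih (S.erase cs) hsub (a cs)
      (fun c hc => h1 c (Finset.mem_of_mem_erase hc))
      (fun c hc c' hc' => h2 c (Finset.mem_of_mem_erase hc) c' (Finset.mem_of_mem_erase hc'))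
      (fun c hc c' hc' => hD c (Finset.mem_of_mem_erase hc) c' (Finset.mem_of_mem_erase hc'))
      (fun c hc => h3 c (Finset.mem_of_mem_erase hc))
      key (h3 cs hcs)
    have hsum : ∑ c ∈ S, (b c - a c) = (∑ c ∈ S.erase cs, (b c - a c)) + (b cs - a cs) := by
      rw [Finset.sum_erase_add _ _ hcs]
    rw [hsum]
    have := h4 cs hcs
    linarith


lemma depth_parent_add {v : T.V} (hv : v ≠ T.root) : T.depth v = T.depth (T.parent v) + 1 := by
  have h1 : T.depth v ≠ 0 := fun h0 => hv (eq_root_of_depth_eq_zero h0)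
  have hs : T.parent^[T.depth v - 1] (T.parent v) = T.root := by
    have := depth_spec v
    rwa [show T.depth v = (T.depth v - 1) + 1 by omega, Function.iterate_succ_apply] at this
  have le1 : T.depth (T.parent v) ≤ T.depth v - 1 := depth_le hs
  have le2 : T.depth v ≤ T.depth (T.parent v) + 1 := by
    apply depth_le
    rw [Function.iterate_succ_apply]; exact depth_spec (T.parent v)
  omega

lemma anc_strict_depth {a b : T.V} (h : T.Anc a b) (hne : a ≠ b) : T.depth a < T.depth b := by
  have h1 := anc_depth_le h
  rcases lt_or_eq_of_le h1 with h2 | h2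
  · exact h2
  · exact absurd (anc_eq_of_depth_le h (le_of_eq h2.symm)) hne

lemma anc_parent_parent {a b : T.V} (h : T.Anc a b) : T.Anc (T.parent a) (T.parent b) := by
  by_cases hab : a = b
  · rw [hab]; exact anc_refl _
  · exact anc_trans (anc_parent_self a) (anc_parent_of_ne h hab)

section Structural
variable {χ : T.V → ℕ} {x : T.V}

/-- tops on `P_x` are pairwise comparable. -/
lemma top_comp (hχ : T.IsMonotone χ) {c c' : ℕ} (hc : c ∈ (T.pathToRoot x).image χ)
    (hc' : c' ∈ (T.pathToRoot x).image χ) :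
    T.Anc (T.topEdge χ c) (T.topEdge χ c') ∨ T.Anc (T.topEdge χ c') (T.topEdge χ c) := by
  have h1 := (mem_pathToRoot.mp (top_mem_path hχ hc)).2
  have h2 := (mem_pathToRoot.mp (top_mem_path hχ hc')).2
  exact anc_total h1 h2

lemma top_inj (hχ : T.IsMonotone χ) {c c' : ℕ} (hc : c ∈ (T.pathToRoot x).image χ)
    (hc' : c' ∈ (T.pathToRoot x).image χ)
    (h : T.topEdge χ c = T.topEdge χ c') : c = c' := by
  rw [← chi_top hχ hc, h, chi_top hχ hc']

/-- every color's top is above the top of `χ x`. -/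
lemma top_anc_top_chix (hχ : T.IsMonotone χ) (hxr : x ≠ T.root) {c : ℕ}
    (hc : c ∈ (T.pathToRoot x).image χ) :
    T.Anc (T.topEdge χ c) (T.topEdge χ (χ x)) := by
  obtain ⟨e, he, hce⟩ := exists_edge_of_mem_C hc
  have hxx : x ∈ T.pathToRoot x := mem_pathToRoot.mpr ⟨hxr, anc_refl x⟩
  have := top_anc_top hχ hxx he (mem_pathToRoot.mp he).2
  rwa [hce] at this

/-- the "upSet" lemma : colors above `v_c` are exactly the colors `≺ c`. -/
lemma upSet (hχ : T.IsMonotone χ) {c : ℕ} (hc : c ∈ (T.pathToRoot x).image χ) :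
    (T.pathToRoot (T.vcol χ c)).image χ =
      ((T.pathToRoot x).image χ).filter
        (fun c' => T.Anc (T.topEdge χ c') (T.topEdge χ c) ∧ c' ≠ c) := by
  ext c'
  simp only [Finset.mem_image, Finset.mem_filter]
  constructor
  · rintro ⟨e, he, rfl⟩
    obtain ⟨her, hey⟩ := mem_pathToRoot.mp he
    have hyt : T.Anc (T.vcol χ c) (T.topEdge χ c) := anc_parent_self _
    have het : T.Anc e (T.topEdge χ c) := anc_trans hey hyt
    have hex : e ∈ T.pathToRoot x :=
      mem_pathToRoot.mpr ⟨her, anc_trans het (mem_pathToRoot.mp (top_mem_path hχ hc)).2⟩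
    have hprop := top_anc_top hχ (top_mem_path hχ hc) hex het
    rw [chi_top hχ hc] at hprop
    refine ⟨⟨e, hex, rfl⟩, hprop, ?_⟩
    intro hcc
    have h1 : T.Anc (T.topEdge χ c) e := top_anc hχ hc her hcc
    have h2 : e = T.topEdge χ c := anc_antisymm het h1
    -- then topEdge c is an ancestor of its own parent : depth contradiction
    rw [h2] at hey
    have h3 := anc_depth_le hey
    have h4 := depth_parent_add (v := T.topEdge χ c) (top_ne_root hχ hc)
    rw [vcol] at h3
    omega
  · rintro ⟨⟨e, hex, rfl⟩, hanc, hne⟩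
    have hcc' : χ e ∈ (T.pathToRoot x).image χ := Finset.mem_image_of_mem χ hex
    refine ⟨T.topEdge χ (χ e), ?_, chi_top hχ hcc'⟩
    rw [mem_pathToRoot]
    refine ⟨top_ne_root hχ hcc', ?_⟩
    have htne : T.topEdge χ (χ e) ≠ T.topEdge χ c := by
      intro h; exact hne (top_inj hχ hcc' hc h)
    exact anc_parent_of_ne hanc htne

end Structural


section Structural2
variable {χ : T.V → ℕ} {c₀ : ℕ} {x : T.V}

/-- the color of the edge above the top of `c`'s class. -/
lemma chi_vcol_mem (hχ : T.IsMonotone χ) {c : ℕ} (hc : c ∈ (T.pathToRoot x).image χ)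
    (hyr : T.vcol χ c ≠ T.root) :
    χ (T.vcol χ c) ∈ (T.pathToRoot x).image χ ∧
      T.Anc (T.topEdge χ (χ (T.vcol χ c))) (T.topEdge χ c) ∧ χ (T.vcol χ c) ≠ c := by
  have hmem : T.vcol χ c ∈ T.pathToRoot (T.vcol χ c) := mem_pathToRoot.mpr ⟨hyr, anc_refl _⟩
  have h1 : χ (T.vcol χ c) ∈ (T.pathToRoot (T.vcol χ c)).image χ :=
    Finset.mem_image_of_mem χ hmem
  rw [upSet hχ hc] at h1
  exact ⟨(Finset.mem_filter.mp h1).1, (Finset.mem_filter.mp h1).2.1, (Finset.mem_filter.mp h1).2.2⟩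

/-- maximality of the parent color below `c`. -/
lemma chi_vcol_max (hχ : T.IsMonotone χ) {c c' : ℕ} (hc : c ∈ (T.pathToRoot x).image χ)
    (hc' : c' ∈ (T.pathToRoot x).image χ) (hyr : T.vcol χ c' ≠ T.root)
    (hanc : T.Anc (T.topEdge χ c) (T.topEdge χ c')) (hne : c ≠ c') :
    T.Anc (T.topEdge χ c) (T.topEdge χ (χ (T.vcol χ c'))) := by
  have hmem : T.topEdge χ c ∈ T.pathToRoot (T.vcol χ c') := by
    rw [mem_pathToRoot]
    refine ⟨top_ne_root hχ hc, anc_parent_of_ne hanc ?_⟩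
    intro h; exact hne (top_inj hχ hc hc' h)
  have h1 : c ∈ (T.pathToRoot (T.vcol χ c')).image χ := by
    have := Finset.mem_image_of_mem χ hmem
    rwa [chi_top hχ hc] at this
  -- use S2 inside pathToRoot x with e' = top c, e = vcol χ c'
  have hvx : T.vcol χ c' ∈ T.pathToRoot x := by
    rw [mem_pathToRoot]
    exact ⟨hyr, anc_trans (anc_parent_self _) (mem_pathToRoot.mp (top_mem_path hχ hc')).2⟩
  have := top_anc_top hχ hvx (top_mem_path hχ hc) (mem_pathToRoot.mp hmem).2
  rwa [chi_top hχ hc] at this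



lemma phi_eq_sum (hχ : T.IsMonotone χ) (hc₀ : ∀ e : T.V, e ≠ T.root → χ e ≠ c₀)
    {c : ℕ} (hc : c ∈ (T.pathToRoot x).image χ) :
    T.phi χ c₀ c = ∑ c' ∈ ((T.pathToRoot x).image χ).filter
      (fun c' => T.Anc (T.topEdge χ c') (T.topEdge χ c)), T.kappa χ c₀ c' := by
  obtain ⟨e, he, hce⟩ := exists_edge_of_mem_C hc
  have hcc0 : c ≠ c₀ := hce ▸ hc₀ e (mem_pathToRoot.mp he).1
  rw [phi, if_neg hcc0, upSet hχ hc]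
  have hsplit : ((T.pathToRoot x).image χ).filter
      (fun c' => T.Anc (T.topEdge χ c') (T.topEdge χ c)) =
    insert c (((T.pathToRoot x).image χ).filter
      (fun c' => T.Anc (T.topEdge χ c') (T.topEdge χ c) ∧ c' ≠ c)) := by
    ext c'
    simp only [Finset.mem_filter, Finset.mem_insert]
    constructor
    · rintro ⟨h1, h2⟩
      by_cases hcc : c' = c
      · exact Or.inl hcc
      · exact Or.inr ⟨h1, h2, hcc⟩
    · rintro (rfl | ⟨h1, h2, h3⟩)
      · exact ⟨hc, anc_refl _⟩
      · exact ⟨h1, h2⟩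
  rw [hsplit, Finset.sum_insert (by simp)]

lemma subEdges_eq (hχ : T.IsMonotone χ) (hc₀ : ∀ e : T.V, e ≠ T.root → χ e ≠ c₀)
    {c : ℕ} (hc : c ∈ (T.pathToRoot x).image χ) :
    T.subEdges χ c₀ c = T.edges.filter (fun e => T.Anc (T.topEdge χ c) e) := by
  obtain ⟨e, he, hce⟩ := exists_edge_of_mem_C hc
  have hcc0 : c ≠ c₀ := hce ▸ hc₀ e (mem_pathToRoot.mp he).1
  rw [subEdges, if_neg hcc0]

lemma subEdges_card_pos (hχ : T.IsMonotone χ) (hc₀ : ∀ e : T.V, e ≠ T.root → χ e ≠ c₀)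
    {c : ℕ} (hc : c ∈ (T.pathToRoot x).image χ) :
    0 < (T.subEdges χ c₀ c).card := by
  rw [subEdges_eq hχ hc₀ hc]
  refine Finset.card_pos.mpr ⟨T.topEdge χ c, ?_⟩
  rw [Finset.mem_filter, edges, Finset.mem_filter]
  exact ⟨⟨Finset.mem_univ _, top_ne_root hχ hc⟩, anc_refl _⟩

lemma subEdges_subset_edges (c : ℕ) : T.subEdges χ c₀ c ⊆ T.edges := by
  rw [subEdges]
  split
  · exact Finset.Subset.refl _
  · exact Finset.filter_subset _ _

lemma subEdges_anti (hχ : T.IsMonotone χ) (hc₀ : ∀ e : T.V, e ≠ T.root → χ e ≠ c₀)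
    {c c' : ℕ} (hc : c ∈ (T.pathToRoot x).image χ) (hc' : c' ∈ (T.pathToRoot x).image χ)
    (h : T.Anc (T.topEdge χ c) (T.topEdge χ c')) :
    T.subEdges χ c₀ c' ⊆ T.subEdges χ c₀ c := by
  rw [subEdges_eq hχ hc₀ hc, subEdges_eq hχ hc₀ hc']
  intro e he
  rw [Finset.mem_filter] at he ⊢
  exact ⟨he.1, anc_trans h he.2⟩

/-- the parent-subtree edge set contains the subtree edge set. -/
lemma subEdges_parent_supset (hχ : T.IsMonotone χ) (hc₀ : ∀ e : T.V, e ≠ T.root → χ e ≠ c₀)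
    {c : ℕ} (hc : c ∈ (T.pathToRoot x).image χ) :
    T.subEdges χ c₀ c ⊆ T.subEdges χ c₀ (T.parentColor χ c₀ c) := by
  rw [parentColor]
  split
  · have h0 : T.subEdges χ c₀ c₀ = T.edges := by rw [subEdges, if_pos rfl]
    rw [h0]; exact subEdges_subset_edges _
  · rename_i hyr
    obtain ⟨h1, h2, h3⟩ := chi_vcol_mem hχ hc hyr
    exact subEdges_anti hχ hc₀ h1 hc h2

lemma kappa_ge_one (hχ : T.IsMonotone χ) (hc₀ : ∀ e : T.V, e ≠ T.root → χ e ≠ c₀)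
    {c : ℕ} (hc : c ∈ (T.pathToRoot x).image χ) : 1 ≤ T.kappa χ c₀ c := by
  rw [kappa]
  have hB : 0 < (T.subEdges χ c₀ c).card := subEdges_card_pos hχ hc₀ hc
  have hA : (T.subEdges χ c₀ c).card ≤ (T.subEdges χ c₀ (T.parentColor χ c₀ c)).card :=
    Finset.card_le_card (subEdges_parent_supset hχ hc₀ hc)
  have h1 : (1:ℝ) ≤ ((T.subEdges χ c₀ (T.parentColor χ c₀ c)).card : ℝ) /
      ((T.subEdges χ c₀ c).card : ℝ) := by
    rw [le_div_iff₀ (by exact_mod_cast hB)]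
    simpa using (Nat.cast_le (α := ℝ)).mpr hA
  have h2 : 0 ≤ Real.logb 2 (((T.subEdges χ c₀ (T.parentColor χ c₀ c)).card : ℝ) /
      ((T.subEdges χ c₀ c).card : ℝ)) := Real.logb_nonneg (by norm_num) h1
  have h3 : (0:ℤ) ≤ ⌊Real.logb 2 (((T.subEdges χ c₀ (T.parentColor χ c₀ c)).card : ℝ) /
      ((T.subEdges χ c₀ c).card : ℝ))⌋ := Int.floor_nonneg.mpr h2
  omega

lemma kappa_le_log (hχ : T.IsMonotone χ) (hc₀ : ∀ e : T.V, e ≠ T.root → χ e ≠ c₀)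
    {c : ℕ} (hc : c ∈ (T.pathToRoot x).image χ) :
    (T.kappa χ c₀ c : ℝ) ≤
      Real.logb 2 ((T.subEdges χ c₀ (T.parentColor χ c₀ c)).card : ℝ) -
        Real.logb 2 ((T.subEdges χ c₀ c).card : ℝ) + 1 := by
  rw [kappa]
  have hB : 0 < (T.subEdges χ c₀ c).card := subEdges_card_pos hχ hc₀ hc
  have hA : 0 < (T.subEdges χ c₀ (T.parentColor χ c₀ c)).card :=
    lt_of_lt_of_le hB (Finset.card_le_card (subEdges_parent_supset hχ hc₀ hc))
  have hd : Real.logb 2 (((T.subEdges χ c₀ (T.parentColor χ c₀ c)).card : ℝ) /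
      ((T.subEdges χ c₀ c).card : ℝ)) =
      Real.logb 2 ((T.subEdges χ c₀ (T.parentColor χ c₀ c)).card : ℝ) -
        Real.logb 2 ((T.subEdges χ c₀ c).card : ℝ) :=
    Real.logb_div (by positivity) (by positivity)
  push_cast
  rw [← hd]
  have := Int.floor_le (Real.logb 2 (((T.subEdges χ c₀ (T.parentColor χ c₀ c)).card : ℝ) /
      ((T.subEdges χ c₀ c).card : ℝ)))
  linarith


lemma phi_chix_le (hχ : T.IsMonotone χ) (hc₀ : ∀ e : T.V, e ≠ T.root → χ e ≠ c₀)
    (hxr : x ≠ T.root) :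
    ((T.phi χ c₀ (χ x) : ℤ) : ℝ) ≤ (T.mult χ : ℝ) + Real.logb 2 (T.edges.card : ℝ) := by
  have hxx : x ∈ T.pathToRoot x := mem_pathToRoot.mpr ⟨hxr, anc_refl x⟩
  have hcx : χ x ∈ (T.pathToRoot x).image χ := Finset.mem_image_of_mem χ hxx
  have hE1 : 1 ≤ T.edges.card := by
    refine Finset.card_pos.mpr ⟨x, ?_⟩
    rw [edges, Finset.mem_filter]; exact ⟨Finset.mem_univ _, hxr⟩
  have hfil : ((T.pathToRoot x).image χ).filter
      (fun c' => T.Anc (T.topEdge χ c') (T.topEdge χ (χ x))) = (T.pathToRoot x).image χ :=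
    Finset.filter_true_of_mem (fun c' hc' => top_anc_top_chix hχ hxr hc')
  rw [phi_eq_sum hχ hc₀ hcx, hfil]
  -- abbreviations
  set C := (T.pathToRoot x).image χ with hC
  have cardpos : ∀ c ∈ C, 0 < ((T.subEdges χ c₀ c).card : ℝ) := by
    intro c hc; exact_mod_cast subEdges_card_pos hχ hc₀ hc
  have cardposA : ∀ c ∈ C, 0 < ((T.subEdges χ c₀ (T.parentColor χ c₀ c)).card : ℝ) := by
    intro c hc
    have := subEdges_card_pos hχ hc₀ hc
    have h2 := Finset.card_le_card (subEdges_parent_supset hχ hc₀ hc)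
    have : 0 < (T.subEdges χ c₀ (T.parentColor χ c₀ c)).card := by omega
    exact_mod_cast this
  have hpack : ∑ c ∈ C, ((- Real.logb 2 ((T.subEdges χ c₀ c).card : ℝ)) -
      (- Real.logb 2 ((T.subEdges χ c₀ (T.parentColor χ c₀ c)).card : ℝ))) ≤
      0 - (- Real.logb 2 (T.edges.card : ℝ)) := by
    apply interval_packing
      (a := fun c => - Real.logb 2 ((T.subEdges χ c₀ (T.parentColor χ c₀ c)).card : ℝ))
      (b := fun c => - Real.logb 2 ((T.subEdges χ c₀ c).card : ℝ))
      (D := fun c => T.depth (T.topEdge χ c))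
    · intro c hc
      have h1 : ((T.subEdges χ c₀ c).card : ℝ) ≤
          ((T.subEdges χ c₀ (T.parentColor χ c₀ c)).card : ℝ) := by
        exact_mod_cast Finset.card_le_card (subEdges_parent_supset hχ hc₀ hc)
      have := (Real.logb_le_logb (b := 2) (by norm_num) (cardpos c hc)
        (lt_of_lt_of_le (cardpos c hc) h1)).mpr h1
      linarith
    · intro c hc c' hc' hlt
      -- c is strictly above c'
      have hanc : T.Anc (T.topEdge χ c) (T.topEdge χ c') := by
        rcases top_comp hχ hc hc' with h | h
        · exact h
        · have := anc_depth_le h; omega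
      have hne : c ≠ c' := by
        rintro rfl; omega
      have hvr : T.vcol χ c' ≠ T.root := by
        intro hroot
        have htne : T.topEdge χ c ≠ T.topEdge χ c' := fun h => hne (top_inj hχ hc hc' h)
        have := anc_parent_of_ne hanc htne
        rw [← vcol, hroot] at this
        exact top_ne_root hχ hc (anc_root_eq this)
      have hmax := chi_vcol_max hχ hc hc' hvr hanc hne
      have hmem := (chi_vcol_mem hχ hc' hvr).1
      have hsub : T.subEdges χ c₀ (χ (T.vcol χ c')) ⊆ T.subEdges χ c₀ c :=
        subEdges_anti hχ hc₀ hc hmem hmax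
      have hpc : T.parentColor χ c₀ c' = χ (T.vcol χ c') := by
        rw [parentColor, if_neg hvr]
      rw [hpc]
      have h1 : ((T.subEdges χ c₀ (χ (T.vcol χ c'))).card : ℝ) ≤
          ((T.subEdges χ c₀ c).card : ℝ) := by exact_mod_cast Finset.card_le_card hsub
      have h2 : 0 < ((T.subEdges χ c₀ (χ (T.vcol χ c'))).card : ℝ) := by
        have := hpc ▸ cardposA c' hc'
        exact this
      have := (Real.logb_le_logb (b := 2) (by norm_num) h2
        (lt_of_lt_of_le h2 h1)).mpr h1
      linarith
    · intro c hc c' hc' hdeq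
      rcases top_comp hχ hc hc' with h | h
      · exact top_inj hχ hc hc' (anc_eq_of_depth_le h (le_of_eq hdeq.symm))
      · exact (top_inj hχ hc' hc (anc_eq_of_depth_le h (le_of_eq hdeq))).symm
    · intro c hc
      have h1 : ((T.subEdges χ c₀ (T.parentColor χ c₀ c)).card : ℝ) ≤ (T.edges.card : ℝ) := by
        exact_mod_cast Finset.card_le_card (subEdges_subset_edges _)
      have := (Real.logb_le_logb (b := 2) (by norm_num) (cardposA c hc)
        (lt_of_lt_of_le (cardposA c hc) h1)).mpr h1
      linarith
    · intro c hc
      have h1 : (1:ℝ) ≤ ((T.subEdges χ c₀ c).card : ℝ) := by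
        have := subEdges_card_pos hχ hc₀ hc
        exact_mod_cast this
      have := Real.logb_nonneg (b := 2) (by norm_num) h1
      linarith
    · have h1 : (1:ℝ) ≤ (T.edges.card : ℝ) := by exact_mod_cast hE1
      have := Real.logb_nonneg (b := 2) (by norm_num) h1
      linarith
  have hcard : (C.card : ℝ) ≤ (T.mult χ : ℝ) := by
    have : C.card ≤ T.mult χ := by
      rw [hC, mult]
      exact Finset.le_sup (f := fun v : T.V => ((T.pathToRoot v).image χ).card) (Finset.mem_univ x)
    exact_mod_cast this
  have hsum : ((∑ c' ∈ C, T.kappa χ c₀ c' : ℤ) : ℝ) = ∑ c' ∈ C, ((T.kappa χ c₀ c' : ℤ) : ℝ) := by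
    push_cast; rfl
  rw [hsum]
  have hterm : ∀ c ∈ C, ((T.kappa χ c₀ c : ℤ) : ℝ) ≤
      ((- Real.logb 2 ((T.subEdges χ c₀ c).card : ℝ)) -
      (- Real.logb 2 ((T.subEdges χ c₀ (T.parentColor χ c₀ c)).card : ℝ))) + 1 := by
    intro c hc
    have := kappa_le_log hχ hc₀ hc
    linarith
  calc ∑ c' ∈ C, ((T.kappa χ c₀ c' : ℤ) : ℝ)
      ≤ ∑ c' ∈ C, (((- Real.logb 2 ((T.subEdges χ c₀ c').card : ℝ)) -
        (- Real.logb 2 ((T.subEdges χ c₀ (T.parentColor χ c₀ c')).card : ℝ))) + 1) :=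
        Finset.sum_le_sum hterm
    _ = (∑ c' ∈ C, ((- Real.logb 2 ((T.subEdges χ c₀ c').card : ℝ)) -
        (- Real.logb 2 ((T.subEdges χ c₀ (T.parentColor χ c₀ c')).card : ℝ)))) + C.card := by
        rw [Finset.sum_add_distrib]; simp
    _ ≤ (0 - (- Real.logb 2 (T.edges.card : ℝ))) + (T.mult χ : ℝ) := by
        exact add_le_add hpack hcard
    _ = (T.mult χ : ℝ) + Real.logb 2 (T.edges.card : ℝ) := by ring

end Structural2

section MinLen

lemma minLen_pos (hpos : ∃ e : T.V, e ≠ T.root ∧ 0 < T.len e) : 0 < T.minLen := by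
  set S := {y : ℝ | ∃ e : T.V, e ≠ T.root ∧ 0 < T.len e ∧ T.len e = y} with hS
  have hne : S.Nonempty := by
    obtain ⟨e, he, hl⟩ := hpos; exact ⟨T.len e, e, he, hl, rfl⟩
  have hfin : S.Finite := by
    apply Set.Finite.subset (Set.finite_range T.len)
    rintro y ⟨e, _, _, rfl⟩; exact ⟨e, rfl⟩
  have hmem : sInf S ∈ S := Set.Nonempty.csInf_mem hne hfin
  obtain ⟨e, _, hl, hle⟩ := hmem
  rw [minLen, ← hS, ← hle]
  exact hl

lemma minLen_le {e : T.V} (he : e ≠ T.root) (hl : 0 < T.len e) : T.minLen ≤ T.len e := by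
  apply csInf_le
  · exact ⟨0, by rintro y ⟨e', _, hl', rfl⟩; exact hl'.le⟩
  · exact ⟨e, he, hl, rfl⟩

lemma minLen_le_dist {x w : T.V} (h : 0 < T.dist x w) : T.minLen ≤ T.dist x w := by
  have hex : ∃ e ∈ T.pathEdges x w, 0 < T.len e := by
    by_contra hno
    push_neg at hno
    have : T.dist x w ≤ 0 := Finset.sum_nonpos (fun e he => hno e he)
    linarith
  obtain ⟨e, he, hl⟩ := hex
  have her : e ≠ T.root := by
    rw [pathEdges, Finset.mem_union] at he
    rcases he with h' | h'
    · exact (mem_pathToRoot.mp (Finset.mem_sdiff.mp h').1).1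
    · exact (mem_pathToRoot.mp (Finset.mem_sdiff.mp h').1).1
  calc T.minLen ≤ T.len e := minLen_le her hl
    _ ≤ T.dist x w := Finset.single_le_sum (fun e' _ => T.len_nonneg e') he

lemma iMin_money {χ : T.V → ℕ} (hpos : ∃ e : T.V, e ≠ T.root ∧ 0 < T.len e)
    (hM : 1 ≤ T.mult χ) (hE : 1 ≤ T.edges.card) :
    (2:ℝ)^(T.iMin χ) * ((T.mult χ : ℝ) + Real.logb 2 (T.edges.card : ℝ)) ≤ T.minLen := by
  have hml := minLen_pos (T := T) hpos
  have hlogE : 0 ≤ Real.logb 2 (T.edges.card : ℝ) :=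
    Real.logb_nonneg (by norm_num) (by exact_mod_cast hE)
  have hden : (0:ℝ) < (T.mult χ : ℝ) + Real.logb 2 (T.edges.card : ℝ) := by
    have : (1:ℝ) ≤ (T.mult χ : ℝ) := by exact_mod_cast hM
    linarith
  set z := T.minLen / ((T.mult χ : ℝ) + Real.logb 2 (T.edges.card : ℝ)) with hz
  have hzpos : 0 < z := div_pos hml hden
  have h1 : (2:ℝ)^(T.iMin χ) ≤ z := by
    have h2 : (2:ℝ)^(T.iMin χ) = (2:ℝ)^((T.iMin χ : ℤ) : ℝ) := by
      rw [Real.rpow_intCast]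
    rw [h2]
    calc (2:ℝ)^((T.iMin χ : ℤ) : ℝ) ≤ (2:ℝ)^(Real.logb 2 z) := by
          apply Real.rpow_le_rpow_of_exponent_le (by norm_num)
          exact_mod_cast Int.floor_le (Real.logb 2 z)
      _ = z := Real.rpow_logb (by norm_num) (by norm_num) hzpos
  calc (2:ℝ)^(T.iMin χ) * ((T.mult χ : ℝ) + Real.logb 2 (T.edges.card : ℝ))
      ≤ z * ((T.mult χ : ℝ) + Real.logb 2 (T.edges.card : ℝ)) := by
        apply mul_le_mul_of_nonneg_right h1 hden.le
    _ = T.minLen := by rw [hz]; field_simp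

end MinLen

end FinTree


set_option maxHeartbeats 1000000

open FinTree

/-- Lemma on vanishing of `τ_k` below a vertex whose `φ`-value jumps. -/
theorem tau_eq_zero_of_phi_jump (T : FinTree) (χ : T.V → ℕ) (hχ : T.IsMonotone χ)
    (c₀ : ℕ) (hc₀ : ∀ e : T.V, e ≠ T.root → χ e ≠ c₀)
    (hpos : ∃ e : T.V, e ≠ T.root ∧ 0 < T.len e)
    (τ : ℤ → T.V → ℕ) (hτ : T.IsScaleSelector χ c₀ τ)
    (u w : T.V) (hu : u ≠ T.root) (hw : w ≠ T.root) (hwu : T.Anc w u)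
    (hφ : T.phi χ c₀ (χ w) < T.phi χ c₀ (χ u))
    (x : T.V) (hx : T.Anc u x) (k : ℤ)
    (hk : 6 * T.dist x w / (((T.phi χ c₀ (χ u) - T.phi χ c₀ (χ w) : ℤ)) : ℝ) < (2 : ℝ) ^ k) :
    τ k x = 0 := by
  by_cases hik : k < T.iMin χ
  · exact hτ.1 x k hik
  push_neg at hik
  by_contra htk0
  have htk1 : 1 ≤ τ k x := Nat.one_le_iff_ne_zero.mpr htk0
  -- ==== basic ancestry facts ====
  have hwx : T.Anc w x := anc_trans hwu hx
  have hxr : x ≠ T.root := ne_root_of_anc hwx hw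
  have hxx : x ∈ T.pathToRoot x := mem_pathToRoot.mpr ⟨hxr, anc_refl x⟩
  have hwwx : w ∈ T.pathToRoot x := mem_pathToRoot.mpr ⟨hw, hwx⟩
  have huux : u ∈ T.pathToRoot x := mem_pathToRoot.mpr ⟨hu, hx⟩
  have hcxC : χ x ∈ (T.pathToRoot x).image χ := Finset.mem_image_of_mem χ hxx
  have hcwC : χ w ∈ (T.pathToRoot x).image χ := Finset.mem_image_of_mem χ hwwx
  have hcuC : χ u ∈ (T.pathToRoot x).image χ := Finset.mem_image_of_mem χ huux
  have yanc : ∀ c c' : ℕ, T.Anc (T.topEdge χ c) (T.topEdge χ c') →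
      T.Anc (T.vcol χ c) (T.vcol χ c') := by
    intro c c' h
    simp only [vcol]
    exact anc_parent_parent h
  -- phi is monotone along the order of tops
  have phile : ∀ c ∈ (T.pathToRoot x).image χ, ∀ c' ∈ (T.pathToRoot x).image χ,
      T.Anc (T.topEdge χ c) (T.topEdge χ c') → T.phi χ c₀ c ≤ T.phi χ c₀ c' := by
    intro c hc c' hc' h
    rw [phi_eq_sum hχ hc₀ hc, phi_eq_sum hχ hc₀ hc']
    apply Finset.sum_le_sum_of_subset_of_nonneg
    · intro a ha
      rw [Finset.mem_filter] at ha ⊢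
      exact ⟨ha.1, anc_trans ha.2 h⟩
    · intro a ha _
      rw [Finset.mem_filter] at ha
      exact le_trans zero_le_one (kappa_ge_one hχ hc₀ ha.1)
  -- ==== the interval of colors below χ w ====
  have hnotwu : ¬ T.Anc (T.topEdge χ (χ u)) (T.topEdge χ (χ w)) := by
    intro h
    exact absurd hφ (not_lt.mpr (phile _ hcuC _ hcwC h))
  set R := ((T.pathToRoot x).image χ).filter
    (fun c => ¬ T.Anc (T.topEdge χ c) (T.topEdge χ (χ w))) with hRdef
  have hcuR : χ u ∈ R := Finset.mem_filter.mpr ⟨hcuC, hnotwu⟩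
  obtain ⟨cp, hcpR, hcpmin⟩ := Finset.exists_min_image R
    (fun c => T.depth (T.topEdge χ c)) ⟨χ u, hcuR⟩
  have hcpC : cp ∈ (T.pathToRoot x).image χ := (Finset.mem_filter.mp hcpR).1
  have hcpn : ¬ T.Anc (T.topEdge χ cp) (T.topEdge χ (χ w)) := (Finset.mem_filter.mp hcpR).2
  have hmin' : ∀ c ∈ R, T.Anc (T.topEdge χ cp) (T.topEdge χ c) := by
    intro c hc
    have hcC : c ∈ (T.pathToRoot x).image χ := (Finset.mem_filter.mp hc).1
    rcases top_comp hχ hcpC hcC with h | h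
    · exact h
    · have h1 := hcpmin c hc
      have h2 : T.topEdge χ c = T.topEdge χ cp := anc_eq_of_depth_le h h1
      rw [← top_inj hχ hcC hcpC h2]
      exact anc_refl _
  have hcwne : χ w ≠ cp := by
    rintro h
    rw [← h] at hcpn
    exact hcpn (anc_refl _)
  have hcwcp : T.Anc (T.topEdge χ (χ w)) (T.topEdge χ cp) := by
    rcases top_comp hχ hcwC hcpC with h | h
    · exact h
    · exact absurd h hcpn
  have hcxR : χ x ∈ R := by
    refine Finset.mem_filter.mpr ⟨hcxC, fun h => ?_⟩
    exact hnotwu (anc_trans (top_anc_top_chix hχ hxr hcuC) h)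
  have hcpcx : T.Anc (T.topEdge χ cp) (T.topEdge χ (χ x)) := hmin' _ hcxR
  have htopne : T.topEdge χ (χ w) ≠ T.topEdge χ cp := by
    intro h; exact hcwne (top_inj hχ hcwC hcpC h)
  have hycp_ne_root : T.vcol χ cp ≠ T.root := by
    intro hroot
    have h1 := anc_parent_of_ne hcwcp htopne
    rw [← vcol, hroot] at h1
    exact top_ne_root hχ hcwC (anc_root_eq h1)
  -- colors above v_{cp} are exactly colors `≤ χ w`
  have hC5 : (T.pathToRoot (T.vcol χ cp)).image χ =
      ((T.pathToRoot x).image χ).filter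
        (fun c' => T.Anc (T.topEdge χ c') (T.topEdge χ (χ w))) := by
    rw [upSet hχ hcpC]
    ext c'
    simp only [Finset.mem_filter]
    constructor
    · rintro ⟨hc', hanc, hne⟩
      refine ⟨hc', ?_⟩
      by_contra hno
      have hc'R : c' ∈ R := Finset.mem_filter.mpr ⟨hc', hno⟩
      have := anc_antisymm (hmin' c' hc'R) hanc
      exact hne (top_inj hχ hc' hcpC this.symm)
    · rintro ⟨hc', hanc⟩
      refine ⟨hc', anc_trans hanc hcwcp, fun h => ?_⟩
      rw [h] at hanc
      exact hcpn hanc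
  have hchiycp : χ (T.vcol χ cp) = χ w := by
    obtain ⟨hm1, hm2, hm3⟩ := chi_vcol_mem hχ hcpC hycp_ne_root
    have hmemy : T.vcol χ cp ∈ T.pathToRoot (T.vcol χ cp) :=
      mem_pathToRoot.mpr ⟨hycp_ne_root, anc_refl _⟩
    have h1 : χ (T.vcol χ cp) ∈ (T.pathToRoot (T.vcol χ cp)).image χ :=
      Finset.mem_image_of_mem χ hmemy
    rw [hC5, Finset.mem_filter] at h1
    have h2 := chi_vcol_max hχ hcwC hcpC hycp_ne_root hcwcp hcwne
    exact top_inj hχ h1.1 hcwC (anc_antisymm h1.2 h2)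
  -- w is above `v_{cp}`
  have hwycp : T.Anc w (T.vcol χ cp) := by
    have hcompwv := (hχ w (T.vcol χ cp) hw hycp_ne_root (by rw [hchiycp])).1
    rcases hcompwv with h | h
    · exact h
    · by_cases hweq : w = T.vcol χ cp
      · rw [hweq]; exact anc_refl _
      · exfalso
        have hsd : T.depth (T.vcol χ cp) < T.depth w := anc_strict_depth h (Ne.symm hweq)
        have htcp_x : T.Anc (T.topEdge χ cp) x := (mem_pathToRoot.mp (top_mem_path hχ hcpC)).2
        have hdpar : T.depth (T.topEdge χ cp) = T.depth (T.vcol χ cp) + 1 := by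
          have := depth_parent_add (v := T.topEdge χ cp) (top_ne_root hχ hcpC)
          rw [vcol]; exact this
        rcases anc_total hwx htcp_x with hA | hB
        · -- w above top cp : depth forces w = top cp
          have h1 : T.depth w ≤ T.depth (T.topEdge χ cp) := anc_depth_le hA
          have h2 : w = T.topEdge χ cp := anc_eq_of_depth_le hA (by omega)
          have h3 : χ w = cp := by rw [h2, chi_top hχ hcpC]
          exact hcwne h3
        · -- top cp above w : monotone forces χ (top cp) = χ w
          have hmid := (hχ (T.vcol χ cp) w hycp_ne_root hw (by rw [hchiycp])).2
            (T.topEdge χ cp) (top_ne_root hχ hcpC) (anc_parent_self _) hB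
          rw [chi_top hχ hcpC, hchiycp] at hmid
          exact hcwne hmid.symm
  -- ==== scale dynamics at x ====
  have hp2k : (0:ℝ) < 2^k := by positivity
  have heqk := hτ.2 x hxr k hik
  have h1k : (1:ℤ) ≤ (τ k x : ℤ) := by exact_mod_cast htk1
  have hA1 : (1:ℤ) ≤ ⌈(T.dist x (T.vcol χ (χ x)) -
      min (T.dist x (T.vcol χ (χ x)))
        (∑ j ∈ Finset.Ico (T.iMin χ) k, (2:ℝ)^j * (τ j x : ℝ))) / (2:ℝ)^k⌉ :=
    le_trans (heqk ▸ h1k) (min_le_left _ _)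
  have hz : (0:ℝ) < (T.dist x (T.vcol χ (χ x)) -
      min (T.dist x (T.vcol χ (χ x)))
        (∑ j ∈ Finset.Ico (T.iMin χ) k, (2:ℝ)^j * (τ j x : ℝ))) / (2:ℝ)^k := by
    have := Int.lt_ceil.mp (lt_of_lt_of_le one_pos hA1)
    exact_mod_cast this
  have hnum : 0 < T.dist x (T.vcol χ (χ x)) -
      min (T.dist x (T.vcol χ (χ x)))
        (∑ j ∈ Finset.Ico (T.iMin χ) k, (2:ℝ)^j * (τ j x : ℝ)) := by
    have h2 := mul_pos hz hp2k
    rwa [div_mul_cancel₀ _ (ne_of_gt hp2k)] at h2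
  have hS0 : 0 ≤ ∑ j ∈ Finset.Ico (T.iMin χ) k, (2:ℝ)^j * (τ j x : ℝ) :=
    s_nonneg (τ := τ) x _
  have hskxk : (∑ j ∈ Finset.Ico (T.iMin χ) k, (2:ℝ)^j * (τ j x : ℝ)) <
      T.dist x (T.vcol χ (χ x)) := by
    rcases le_total (T.dist x (T.vcol χ (χ x)))
        (∑ j ∈ Finset.Ico (T.iMin χ) k, (2:ℝ)^j * (τ j x : ℝ)) with h | h
    · rw [min_eq_left h] at hnum; linarith
    · rw [min_eq_right h] at hnum; linarith
  have hdxpos : 0 < T.dist x (T.vcol χ (χ x)) := lt_of_le_of_lt hS0 hskxk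
  -- per-scale : budget always binds below k
  have hBX : ∀ i : ℤ, T.iMin χ ≤ i → i < k →
      (τ i x : ℝ) = ((T.phi χ c₀ (χ x) : ℤ) : ℝ) -
        ∑ c ∈ (T.pathToRoot x).image χ, (τ i (T.vcol χ c) : ℝ) := by
    intro i hi1 hi2
    have heqi := hτ.2 x hxr i hi1
    have hsub1 : Finset.Ico (T.iMin χ) i ⊆ Finset.Ico (T.iMin χ) k := by
      intro j hj; rw [Finset.mem_Ico] at hj ⊢; omega
    have hsub2 : Finset.Ico (T.iMin χ) (i+1) ⊆ Finset.Ico (T.iMin χ) k := by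
      intro j hj; rw [Finset.mem_Ico] at hj ⊢; omega
    have hterm0 : ∀ j ∈ Finset.Ico (T.iMin χ) k, 0 ≤ (2:ℝ)^j * (τ j x : ℝ) :=
      fun j _ => mul_nonneg (by positivity) (Nat.cast_nonneg _)
    have hsi : (∑ j ∈ Finset.Ico (T.iMin χ) i, (2:ℝ)^j * (τ j x : ℝ)) ≤
        ∑ j ∈ Finset.Ico (T.iMin χ) k, (2:ℝ)^j * (τ j x : ℝ) :=
      Finset.sum_le_sum_of_subset_of_nonneg hsub1 (fun j hj _ => hterm0 j hj)
    have hsi1 : (∑ j ∈ Finset.Ico (T.iMin χ) (i+1), (2:ℝ)^j * (τ j x : ℝ)) ≤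
        ∑ j ∈ Finset.Ico (T.iMin χ) k, (2:ℝ)^j * (τ j x : ℝ) :=
      Finset.sum_le_sum_of_subset_of_nonneg hsub2 (fun j hj _ => hterm0 j hj)
    have hins : Finset.Ico (T.iMin χ) (i+1) = insert i (Finset.Ico (T.iMin χ) i) := by
      ext j; simp only [Finset.mem_Ico, Finset.mem_insert]; omega
    have hsum1 : (∑ j ∈ Finset.Ico (T.iMin χ) (i+1), (2:ℝ)^j * (τ j x : ℝ)) =
        (2:ℝ)^i * (τ i x : ℝ) + ∑ j ∈ Finset.Ico (T.iMin χ) i, (2:ℝ)^j * (τ j x : ℝ) := by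
      rw [hins, Finset.sum_insert (by simp)]
    have hsilt : (∑ j ∈ Finset.Ico (T.iMin χ) i, (2:ℝ)^j * (τ j x : ℝ)) <
        T.dist x (T.vcol χ (χ x)) := lt_of_le_of_lt hsi hskxk
    rcases le_total
        (⌈(T.dist x (T.vcol χ (χ x)) -
            min (T.dist x (T.vcol χ (χ x)))
              (∑ j ∈ Finset.Ico (T.iMin χ) i, (2:ℝ)^j * (τ j x : ℝ))) / (2:ℝ)^i⌉)
        (T.phi χ c₀ (χ x) -
          ∑ c' ∈ (T.pathToRoot x).image χ, (τ i (T.vcol χ c') : ℤ)) with hAB | hBA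
    · exfalso
      rw [min_eq_left hAB, min_eq_right hsilt.le] at heqi
      have h1 : ((T.dist x (T.vcol χ (χ x)) -
          (∑ j ∈ Finset.Ico (T.iMin χ) i, (2:ℝ)^j * (τ j x : ℝ))) / (2:ℝ)^i) ≤
          ((τ i x : ℤ) : ℝ) := by
        rw [heqi]; exact Int.le_ceil _
      have hpi : (0:ℝ) < 2^i := by positivity
      rw [div_le_iff₀ hpi] at h1
      push_cast at h1
      have hfin : T.dist x (T.vcol χ (χ x)) ≤
          ∑ j ∈ Finset.Ico (T.iMin χ) (i+1), (2:ℝ)^j * (τ j x : ℝ) := by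
        rw [hsum1]; nlinarith
      have := lt_of_le_of_lt (le_trans hfin hsi1) hskxk
      exact lt_irrefl _ this
    · rw [min_eq_right hBA] at heqi
      exact_mod_cast heqi
  -- budget inequality induced by the vertex v_{cp}
  have hBud : ∀ i : ℤ, T.iMin χ ≤ i →
      (∑ c ∈ ((T.pathToRoot x).image χ).filter
          (fun c' => T.Anc (T.topEdge χ c') (T.topEdge χ (χ w))), (τ i (T.vcol χ c) : ℝ)) +
        (τ i (T.vcol χ cp) : ℝ) ≤ ((T.phi χ c₀ (χ w) : ℤ) : ℝ) := by
    intro i hi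
    have heqp := hτ.2 (T.vcol χ cp) hycp_ne_root i hi
    have h1 : (τ i (T.vcol χ cp) : ℤ) ≤ T.phi χ c₀ (χ (T.vcol χ cp)) -
        ∑ c' ∈ (T.pathToRoot (T.vcol χ cp)).image χ, (τ i (T.vcol χ c') : ℤ) :=
      heqp.le.trans (min_le_right _ _)
    rw [hchiycp, hC5] at h1
    have h2 : (∑ c' ∈ ((T.pathToRoot x).image χ).filter
          (fun c' => T.Anc (T.topEdge χ c') (T.topEdge χ (χ w))), (τ i (T.vcol χ c') : ℤ)) +
        (τ i (T.vcol χ cp) : ℤ) ≤ T.phi χ c₀ (χ w) := by linarith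
    exact_mod_cast h2
  -- lower bound for τ i x
  have hLB : ∀ i : ℤ, T.iMin χ ≤ i → i < k →
      (((T.phi χ c₀ (χ x) : ℤ) : ℝ) - ((T.phi χ c₀ (χ w) : ℤ) : ℝ)) -
        (∑ c ∈ R.erase cp, (τ i (T.vcol χ c) : ℝ)) ≤ (τ i x : ℝ) := by
    intro i hi1 hi2
    rw [hBX i hi1 hi2]
    have hsplit := Finset.sum_filter_add_sum_filter_not ((T.pathToRoot x).image χ)
      (fun c => T.Anc (T.topEdge χ c) (T.topEdge χ (χ w))) (fun c => (τ i (T.vcol χ c) : ℝ))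
    have hRsum : (∑ c ∈ R, (τ i (T.vcol χ c) : ℝ)) =
        (τ i (T.vcol χ cp) : ℝ) + ∑ c ∈ R.erase cp, (τ i (T.vcol χ c) : ℝ) :=
      (Finset.add_sum_erase R _ hcpR).symm
    have h3 := hBud i hi1
    rw [← hRdef] at hsplit
    rw [← hsplit, hRsum]
    linarith
  -- facts about the colors strictly between χ w and χ x
  have hfacts : ∀ c ∈ R.erase cp, c ∈ (T.pathToRoot x).image χ ∧
      T.Anc (T.topEdge χ cp) (T.topEdge χ c) ∧ T.vcol χ c ≠ T.root ∧ c ≠ cp := by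
    intro c hc
    have hcR : c ∈ R := Finset.mem_of_mem_erase hc
    have hcC : c ∈ (T.pathToRoot x).image χ := (Finset.mem_filter.mp hcR).1
    have hanccp : T.Anc (T.topEdge χ cp) (T.topEdge χ c) := hmin' c hcR
    have hwc : T.Anc w (T.vcol χ c) := anc_trans hwycp (yanc _ _ hanccp)
    exact ⟨hcC, hanccp, ne_root_of_anc hwc hw, Finset.ne_of_mem_erase hc⟩
  -- total covered length of each intermediate color at scales < k
  have hc_bound : ∀ c ∈ R.erase cp,
      (∑ i ∈ Finset.Ico (T.iMin χ) k, (2:ℝ)^i * (τ i (T.vcol χ c) : ℝ)) ≤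
        (T.plen (T.vcol χ c) - T.plen (T.vcol χ (χ (T.vcol χ c)))) + 2^(k-1) := by
    intro c hc
    obtain ⟨hcC, hanccp, hvcr, hnecp⟩ := hfacts c hc
    have h1 := s_le hχ hτ hvcr hik
    rwa [dist_eq_of_anc (vcol_anc hχ hvcr)] at h1
  -- interval packing of the intermediate color classes
  have hpack : (∑ c ∈ R.erase cp,
      (T.plen (T.vcol χ c) - T.plen (T.vcol χ (χ (T.vcol χ c))))) ≤
      T.plen (T.vcol χ (χ x)) - T.plen (T.vcol χ cp) := by
    apply interval_packing
      (a := fun c => T.plen (T.vcol χ (χ (T.vcol χ c))))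
      (b := fun c => T.plen (T.vcol χ c))
      (D := fun c => T.depth (T.topEdge χ c))
    · intro c hc
      exact plen_mono (vcol_anc hχ (hfacts c hc).2.2.1)
    · intro c hc c' hc' hlt
      obtain ⟨hcC, _, _, _⟩ := hfacts c hc
      obtain ⟨hc'C, _, hvc'r, _⟩ := hfacts c' hc'
      have hanc : T.Anc (T.topEdge χ c) (T.topEdge χ c') := by
        rcases top_comp hχ hcC hc'C with h | h
        · exact h
        · have := anc_depth_le h; omega
      have hne : c ≠ c' := by rintro rfl; omega
      exact plen_mono (yanc _ _ (chi_vcol_max hχ hcC hc'C hvc'r hanc hne))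
    · intro c hc c' hc' hdeq
      obtain ⟨hcC, _, _, _⟩ := hfacts c hc
      obtain ⟨hc'C, _, _, _⟩ := hfacts c' hc'
      rcases top_comp hχ hcC hc'C with h | h
      · exact top_inj hχ hcC hc'C (anc_eq_of_depth_le h (le_of_eq hdeq.symm))
      · exact (top_inj hχ hc'C hcC (anc_eq_of_depth_le h (le_of_eq hdeq))).symm
    · intro c hc
      obtain ⟨hcC, hanccp, hvcr, hnecp⟩ := hfacts c hc
      exact plen_mono (yanc _ _ (chi_vcol_max hχ hcpC hcC hvcr hanccp (Ne.symm hnecp)))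
    · intro c hc
      exact plen_mono (yanc _ _ (top_anc_top_chix hχ hxr (hfacts c hc).1))
    · exact plen_mono (yanc _ _ hcpcx)
  -- the φ-difference counts the colors of R
  have hD2sum : T.phi χ c₀ (χ x) - T.phi χ c₀ (χ w) = ∑ c ∈ R, T.kappa χ c₀ c := by
    rw [phi_eq_sum hχ hc₀ hcxC, phi_eq_sum hχ hc₀ hcwC]
    have hfx : ((T.pathToRoot x).image χ).filter
        (fun c' => T.Anc (T.topEdge χ c') (T.topEdge χ (χ x))) = (T.pathToRoot x).image χ :=
      Finset.filter_true_of_mem (fun c' hc' => top_anc_top_chix hχ hxr hc')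
    rw [hfx]
    have hsp := Finset.sum_filter_add_sum_filter_not ((T.pathToRoot x).image χ)
      (fun c => T.Anc (T.topEdge χ c) (T.topEdge χ (χ w))) (fun c => T.kappa χ c₀ c)
    rw [← hRdef] at hsp
    linarith
  have hcardR : ((R.card : ℤ) : ℝ) ≤
      ((T.phi χ c₀ (χ x) : ℤ) : ℝ) - ((T.phi χ c₀ (χ w) : ℤ) : ℝ) := by
    have h1 : (R.card : ℤ) ≤ ∑ c ∈ R, T.kappa χ c₀ c := by
      have h2 := Finset.sum_le_sum (s := R)
        (f := fun _ : ℕ => (1:ℤ)) (g := fun c => T.kappa χ c₀ c)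
        (fun c hc => kappa_ge_one hχ hc₀ (Finset.mem_filter.mp (hRdef ▸ hc)).1)
      simpa using h2
    have h3 : (R.card : ℤ) ≤ T.phi χ c₀ (χ x) - T.phi χ c₀ (χ w) := by
      rw [hD2sum]; exact h1
    exact_mod_cast h3
  have hcardR1 : (1:ℤ) ≤ (R.card : ℤ) := by
    have : 0 < R.card := Finset.card_pos.mpr ⟨cp, hcpR⟩
    exact_mod_cast this
  have hccp : ((R.erase cp).card : ℝ) = ((R.card : ℤ) : ℝ) - 1 := by
    rw [Finset.card_erase_of_mem hcpR]
    have h1 : 1 ≤ R.card := by exact_mod_cast hcardR1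
    push_cast [Nat.cast_sub h1]
    ring
  -- master inequality
  have hp2k1 : (0:ℝ) < 2^(k-1) := by positivity
  have h2kk : (2:ℝ)^k = 2 * 2^(k-1) := by
    rw [show k = (k-1) + 1 by ring, zpow_add_one₀ (by norm_num : (2:ℝ) ≠ 0)]
    ring
  have hswap : (∑ i ∈ Finset.Ico (T.iMin χ) k,
      (2:ℝ)^i * (∑ c ∈ R.erase cp, (τ i (T.vcol χ c) : ℝ))) =
      ∑ c ∈ R.erase cp, ∑ i ∈ Finset.Ico (T.iMin χ) k, (2:ℝ)^i * (τ i (T.vcol χ c) : ℝ) := by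
    calc (∑ i ∈ Finset.Ico (T.iMin χ) k,
        (2:ℝ)^i * (∑ c ∈ R.erase cp, (τ i (T.vcol χ c) : ℝ)))
        = ∑ i ∈ Finset.Ico (T.iMin χ) k,
            ∑ c ∈ R.erase cp, (2:ℝ)^i * (τ i (T.vcol χ c) : ℝ) :=
          Finset.sum_congr rfl (fun i _ => Finset.mul_sum _ _ _)
      _ = ∑ c ∈ R.erase cp, ∑ i ∈ Finset.Ico (T.iMin χ) k,
            (2:ℝ)^i * (τ i (T.vcol χ c) : ℝ) := Finset.sum_comm
  -- ==== distance bookkeeping ====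
  have hdwx := dist_eq_of_anc hwx
  have hdvx := dist_eq_of_anc (vcol_anc hχ hxr)
  have hplw : T.plen w ≤ T.plen (T.vcol χ cp) := plen_mono hwycp
  have hplcpx : T.plen (T.vcol χ cp) ≤ T.plen (T.vcol χ (χ x)) := plen_mono (yanc _ _ hcpcx)
  have hcpxle : T.plen (T.vcol χ (χ x)) - T.plen (T.vcol χ cp) ≤
      T.dist x w - T.dist x (T.vcol χ (χ x)) := by linarith
  have hdxd : T.dist x (T.vcol χ (χ x)) ≤ T.dist x w := by linarith
  have hdpos : 0 < T.dist x w := lt_of_lt_of_le hdxpos hdxd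
  -- ==== the three key sums ====
  have e3 : (∑ c ∈ R.erase cp, ∑ i ∈ Finset.Ico (T.iMin χ) k,
      (2:ℝ)^i * (τ i (T.vcol χ c) : ℝ)) ≤
      (T.dist x w - T.dist x (T.vcol χ (χ x))) +
        (((T.phi χ c₀ (χ x) : ℤ) : ℝ) - ((T.phi χ c₀ (χ w) : ℤ) : ℝ) - 1) * (2:ℝ)^(k-1) := by
    have h1 := Finset.sum_le_sum hc_bound
    have h2 : (∑ c ∈ R.erase cp,
        ((T.plen (T.vcol χ c) - T.plen (T.vcol χ (χ (T.vcol χ c)))) + (2:ℝ)^(k-1))) =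
        (∑ c ∈ R.erase cp, (T.plen (T.vcol χ c) - T.plen (T.vcol χ (χ (T.vcol χ c))))) +
          ((R.erase cp).card : ℝ) * (2:ℝ)^(k-1) := by
      rw [Finset.sum_add_distrib, Finset.sum_const, nsmul_eq_mul]
    have h3 : ((R.erase cp).card : ℝ) ≤
        ((T.phi χ c₀ (χ x) : ℤ) : ℝ) - ((T.phi χ c₀ (χ w) : ℤ) : ℝ) - 1 := by
      rw [hccp]
      have h4 : ((R.card : ℤ) : ℝ) ≤
          ((T.phi χ c₀ (χ x) : ℤ) : ℝ) - ((T.phi χ c₀ (χ w) : ℤ) : ℝ) := hcardR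
      linarith
    have h5 := mul_le_mul_of_nonneg_right h3 hp2k1.le
    linarith [hpack]
  have e2 : ((2:ℝ)^k - (2:ℝ)^(T.iMin χ)) *
        (((T.phi χ c₀ (χ x) : ℤ) : ℝ) - ((T.phi χ c₀ (χ w) : ℤ) : ℝ)) -
      (∑ c ∈ R.erase cp, ∑ i ∈ Finset.Ico (T.iMin χ) k,
        (2:ℝ)^i * (τ i (T.vcol χ c) : ℝ)) ≤
      ∑ j ∈ Finset.Ico (T.iMin χ) k, (2:ℝ)^j * (τ j x : ℝ) := by
    have h1 : ∀ i ∈ Finset.Ico (T.iMin χ) k,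
        (2:ℝ)^i * (((T.phi χ c₀ (χ x) : ℤ) : ℝ) - ((T.phi χ c₀ (χ w) : ℤ) : ℝ)) -
          (2:ℝ)^i * (∑ c ∈ R.erase cp, (τ i (T.vcol χ c) : ℝ)) ≤
          (2:ℝ)^i * (τ i x : ℝ) := by
      intro i hi
      rw [Finset.mem_Ico] at hi
      have hlb := hLB i hi.1 hi.2
      have hp : (0:ℝ) ≤ 2^i := by positivity
      have h2 := mul_le_mul_of_nonneg_left hlb hp
      rw [mul_sub] at h2
      exact h2
    have h2 := Finset.sum_le_sum h1
    rw [Finset.sum_sub_distrib, ← Finset.sum_mul, sum_two_zpow_Ico hik, hswap] at h2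
    exact h2
  -- ==== money bounds ====
  have hM1 : 1 ≤ T.mult χ := by
    have h1 : 0 < ((T.pathToRoot x).image χ).card := Finset.card_pos.mpr ⟨χ x, hcxC⟩
    have h2 : ((T.pathToRoot x).image χ).card ≤ T.mult χ :=
      Finset.le_sup (f := fun v : T.V => ((T.pathToRoot v).image χ).card) (Finset.mem_univ x)
    omega
  have hE1 : 1 ≤ T.edges.card := by
    refine Finset.card_pos.mpr ⟨x, ?_⟩
    rw [edges, Finset.mem_filter]
    exact ⟨Finset.mem_univ _, hxr⟩
  have hPhiX := phi_chix_le hχ hc₀ hxr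
  have hPhiW0 : (0:ℝ) ≤ ((T.phi χ c₀ (χ w) : ℤ) : ℝ) := by
    have h1 : (0:ℤ) ≤ T.phi χ c₀ (χ w) := by
      rw [phi_eq_sum hχ hc₀ hcwC]
      apply Finset.sum_nonneg
      intro c hc
      exact le_trans zero_le_one (kappa_ge_one hχ hc₀ (Finset.mem_filter.mp hc).1)
    exact_mod_cast h1
  have hminlen := minLen_le_dist hdpos
  have hmoney := iMin_money (T := T) (χ := χ) hpos hM1 hE1
  have hp2m : (0:ℝ) < 2^(T.iMin χ) := by positivity
  have hiMinD2 : (2:ℝ)^(T.iMin χ) *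
      (((T.phi χ c₀ (χ x) : ℤ) : ℝ) - ((T.phi χ c₀ (χ w) : ℤ) : ℝ)) ≤ T.dist x w := by
    have h1 : (((T.phi χ c₀ (χ x) : ℤ) : ℝ) - ((T.phi χ c₀ (χ w) : ℤ) : ℝ)) ≤
        (T.mult χ : ℝ) + Real.logb 2 (T.edges.card : ℝ) := by linarith
    have h2 := mul_le_mul_of_nonneg_left h1 hp2m.le
    linarith
  -- ==== φ-jump comparisons ====
  have hDd1 : (1:ℝ) ≤ ((T.phi χ c₀ (χ u) - T.phi χ c₀ (χ w) : ℤ) : ℝ) := by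
    have : (1:ℤ) ≤ T.phi χ c₀ (χ u) - T.phi χ c₀ (χ w) := by omega
    exact_mod_cast this
  have hDdD2 : ((T.phi χ c₀ (χ u) - T.phi χ c₀ (χ w) : ℤ) : ℝ) ≤
      ((T.phi χ c₀ (χ x) : ℤ) : ℝ) - ((T.phi χ c₀ (χ w) : ℤ) : ℝ) := by
    have h1 : T.phi χ c₀ (χ u) ≤ T.phi χ c₀ (χ x) :=
      phile _ hcuC _ hcxC (top_anc_top_chix hχ hxr hcuC)
    have h2 : T.phi χ c₀ (χ u) - T.phi χ c₀ (χ w) ≤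
        T.phi χ c₀ (χ x) - T.phi χ c₀ (χ w) := by omega
    have h3 : ((T.phi χ c₀ (χ u) - T.phi χ c₀ (χ w) : ℤ) : ℝ) ≤
        ((T.phi χ c₀ (χ x) - T.phi χ c₀ (χ w) : ℤ) : ℝ) := by exact_mod_cast h2
    push_cast at h3
    push_cast
    linarith
  have hkd : 6 * T.dist x w <
      (2:ℝ)^k * ((T.phi χ c₀ (χ u) - T.phi χ c₀ (χ w) : ℤ) : ℝ) := by
    have hDd0 : (0:ℝ) < ((T.phi χ c₀ (χ u) - T.phi χ c₀ (χ w) : ℤ) : ℝ) := by linarith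
    have := (div_lt_iff₀ hDd0).mp hk
    linarith
  -- ==== final contradiction ====
  -- abbreviate products to help linarith
  have hr1 : ((2:ℝ)^k - (2:ℝ)^(T.iMin χ)) *
      (((T.phi χ c₀ (χ x) : ℤ) : ℝ) - ((T.phi χ c₀ (χ w) : ℤ) : ℝ)) =
      2 * ((2:ℝ)^(k-1) * (((T.phi χ c₀ (χ x) : ℤ) : ℝ) - ((T.phi χ c₀ (χ w) : ℤ) : ℝ))) -
      (2:ℝ)^(T.iMin χ) * (((T.phi χ c₀ (χ x) : ℤ) : ℝ) - ((T.phi χ c₀ (χ w) : ℤ) : ℝ)) := by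
    rw [h2kk]; ring
  have hr2 : (((T.phi χ c₀ (χ x) : ℤ) : ℝ) - ((T.phi χ c₀ (χ w) : ℤ) : ℝ) - 1) * (2:ℝ)^(k-1) =
      (2:ℝ)^(k-1) * (((T.phi χ c₀ (χ x) : ℤ) : ℝ) - ((T.phi χ c₀ (χ w) : ℤ) : ℝ)) -
      (2:ℝ)^(k-1) := by ring
  -- P*(D2+1) < 2d :
  have e5 : (2:ℝ)^(k-1) * (((T.phi χ c₀ (χ x) : ℤ) : ℝ) - ((T.phi χ c₀ (χ w) : ℤ) : ℝ)) +
      (2:ℝ)^(k-1) < 2 * T.dist x w := by linarith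
  have e6 : (2:ℝ)^(k-1) * ((T.phi χ c₀ (χ u) - T.phi χ c₀ (χ w) : ℤ) : ℝ) ≤
      (2:ℝ)^(k-1) * (((T.phi χ c₀ (χ x) : ℤ) : ℝ) - ((T.phi χ c₀ (χ w) : ℤ) : ℝ)) :=
    mul_le_mul_of_nonneg_left hDdD2 hp2k1.le
  have e7 : (2:ℝ)^(k-1) ≥ (2:ℝ)^(k-1) * 1 := by ring_nf; exact le_refl _
  have e8 : (2:ℝ)^k * ((T.phi χ c₀ (χ u) - T.phi χ c₀ (χ w) : ℤ) : ℝ) =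
      2 * ((2:ℝ)^(k-1) * ((T.phi χ c₀ (χ u) - T.phi χ c₀ (χ w) : ℤ) : ℝ)) := by
    rw [h2kk]; ring
  -- 6d < 2^k Dd = 2 P Dd ≤ 2 P D2 ≤ 2 (P D2 + P) < 4d, contradiction with d > 0
  have hfalse : (6:ℝ) * T.dist x w < 4 * T.dist x w := by
    have h1 : (0:ℝ) ≤ (2:ℝ)^(k-1) := hp2k1.le
    linarith [e5, e6, e8, hkd]
  linarith

end
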